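/- Let N ∈ ℕ, let K : Fin N → Fin N → ℂ be a symmetric kernel (K j k = K k j), let c : Fin N → ℂ, and for t ∈ ℂ and a finite set α ⊆ Fin N write ρ_t(α) := ρ(t • c, α) for the symmetric-scheme Gaudin determinant with z_j = t · c_j. Then for every coefficient function F : Finset (Fin N) → ℂ and all L, l₀ ∈ ℂ, ∑_{α ⊆ univ} F(α) · ρ_{L − l₀}(univ \ α) = ∑_{α ⊆ univ} ( ∑_{β ⊆ α} F(β) · ρ_{−l₀}(α \ β) ) · ρ_L(univ \ α). (This is the paper's change of volume parameter from l = L − l₀ to L: C_HHL = (∏ 1/h̃(u_i,u_i)) ∑ F(α) ρ^s_l(ᾱ) = (∏ 1/h̃(u_i,u_i)) ∑ F^s(α) ρ^s_L(ᾱ) with F^s(α) = ∑_{β∪β̄=α} F(β) ρ^s_{−l₀}(β̄).) -/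

import Mathlib

open Finset

/-- The symmetric-scheme Gaudin determinant: the determinant of the square matrix
indexed by `α` whose `(j,j)` entry is `z j + ∑_{l ∈ α, l ≠ j} K j l` and whose
`(j,k)` entry for `j ≠ k` is `-(K j k)`. By convention it equals `1` on `α = ∅`. -/
noncomputable def gaudin {N : ℕ} (K : Fin N → Fin N → ℂ) (z : Fin N → ℂ)
    (α : Finset (Fin N)) : ℂ :=
  Matrix.det (Matrix.of fun j k : α =>
    if j = k then z j + ∑ l ∈ α.erase (j : Fin N), K j l else -K (j : Fin N) (k : Fin N))


lemma gaudin_congr {N : ℕ} (K : Fin N → Fin N → ℂ) {z z' : Fin N → ℂ}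
    {α : Finset (Fin N)} (h : ∀ j ∈ α, z j = z' j) :
    gaudin K z α = gaudin K z' α := by
  unfold gaudin
  congr 1
  ext j k
  by_cases hjk : j = k
  · simp [hjk, h k k.2]
  · simp [hjk]

lemma gaudin_empty {N : ℕ} (K : Fin N → Fin N → ℂ) (z : Fin N → ℂ) :
    gaudin K z ∅ = 1 := by
  unfold gaudin
  exact Matrix.det_isEmpty

lemma gaudin_zero {N : ℕ} (K : Fin N → Fin N → ℂ) {α : Finset (Fin N)}
    (hα : α.Nonempty) : gaudin K 0 α = 0 := by
  unfold gaudin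
  rw [← Matrix.exists_mulVec_eq_zero_iff]
  refine ⟨fun _ => 1, ?_, ?_⟩
  · intro h
    have : Nonempty α := ⟨⟨hα.choose, hα.choose_spec⟩⟩
    obtain ⟨j⟩ := this
    have := congrFun h j
    simp at this
  · funext j
    show (∑ k : α, _ * _) = (0 : ℂ)
    simp only [mul_one]
    have e1 : ∀ k : α, Matrix.of (fun j k : α =>
        if j = k then (0:Fin N → ℂ) j + ∑ l ∈ α.erase (j : Fin N), K j l
        else -K (j : Fin N) (k : Fin N)) j k
        = (fun l => if l = (j:Fin N) then ∑ l' ∈ α.erase (j : Fin N), K j l' else -K (j:Fin N) l) (k : Fin N) := by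
      intro k
      by_cases hjk : j = k
      · simp [hjk]
      · have : ¬((k : Fin N) = (j : Fin N)) := fun h => hjk (Subtype.ext h.symm)
        simp [hjk, this]
    rw [Fintype.sum_congr _ _ e1, Finset.sum_coe_sort α (fun l => if l = (j:Fin N) then ∑ l' ∈ α.erase (j : Fin N), K j l' else -K (j:Fin N) l)]
    rw [← Finset.add_sum_erase α _ j.2]
    rw [if_pos rfl]
    rw [Finset.sum_congr rfl (fun l hl => if_neg (Finset.ne_of_mem_erase hl))]
    simp


lemma erase_erase_comm {N : ℕ} (s : Finset (Fin N)) (a b : Fin N) :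
    (s.erase a).erase b = (s.erase b).erase a := by
  ext x; simp; tauto

lemma gaudin_expand {N : ℕ} (K : Fin N → Fin N → ℂ) (z : Fin N → ℂ)
    {α : Finset (Fin N)} {j : Fin N} (hj : j ∈ α) :
    gaudin K z α = z j * gaudin K (fun k => z k + K k j) (α.erase j)
      + gaudin K (Function.update z j 0) α := by
  classical
  set M₀ : Matrix α α ℂ := Matrix.of fun a b : α =>
    if a = b then Function.update z j 0 a + ∑ l ∈ α.erase (a : Fin N), K a l
    else -K (a : Fin N) (b : Fin N) with hM₀
  have hM : (Matrix.of fun a b : α =>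
      if a = b then z a + ∑ l ∈ α.erase (a : Fin N), K a l
      else -K (a : Fin N) (b : Fin N))
      = M₀.updateRow ⟨j, hj⟩ (Pi.single ⟨j, hj⟩ (z j) + M₀ ⟨j, hj⟩) := by
    ext ⟨a, haα⟩ ⟨b, hbα⟩
    by_cases ha : a = j
    · subst ha
      rw [show (⟨a, haα⟩ : α) = ⟨a, hj⟩ from rfl, Matrix.updateRow_self, hM₀]
      simp only [Pi.add_apply, Matrix.of_apply]
      by_cases hb : a = b
      · subst hb
        rw [if_pos rfl, if_pos rfl, Pi.single_eq_same, Function.update_self]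
        ring
      · have h1 : (⟨a, hj⟩ : α) ≠ ⟨b, hbα⟩ := fun h => hb (congrArg Subtype.val h)
        rw [if_neg h1, if_neg h1, Pi.single_eq_of_ne (Ne.symm h1)]
        ring
    · have h1 : (⟨a, haα⟩ : α) ≠ ⟨j, hj⟩ := fun h => ha (congrArg Subtype.val h)
      rw [Matrix.updateRow_ne h1, hM₀]
      simp only [Matrix.of_apply]
      by_cases hb : a = b
      · subst hb
        rw [if_pos rfl, if_pos rfl, Function.update_of_ne ha]
      · have h2 : (⟨a, haα⟩ : α) ≠ ⟨b, hbα⟩ := fun h => hb (congrArg Subtype.val h)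
        rw [if_neg h2, if_neg h2]
  have hsingle : (Pi.single (⟨j, hj⟩ : α) (z j) : α → ℂ)
      = z j • (Pi.single (⟨j, hj⟩ : α) 1 : α → ℂ) := by
    funext b
    by_cases h : b = (⟨j, hj⟩ : α)
    · subst h; simp
    · simp [Pi.single_eq_of_ne h]
  have hminor : (M₀.updateRow ⟨j, hj⟩ (Pi.single ⟨j, hj⟩ 1)).det
      = gaudin K (fun k => z k + K k j) (α.erase j) := by
    have hinc : ∀ k : {x // x ∈ α.erase j}, (k : Fin N) ∈ α :=
      fun k => Finset.mem_of_mem_erase k.2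
    let e : Unit ⊕ {x // x ∈ α.erase j} ≃ {x // x ∈ α} :=
      { toFun := Sum.elim (fun _ => ⟨j, hj⟩) (fun k => ⟨k, hinc k⟩)
        invFun := fun a => if h : (a : Fin N) = j then Sum.inl () else
          Sum.inr ⟨a, Finset.mem_erase.mpr ⟨h, a.2⟩⟩
        left_inv := by
          rintro (u | k)
          · simp
          · have : (k : Fin N) ≠ j := (Finset.mem_erase.mp k.2).1
            simp [this]
        right_inv := by
          intro a
          by_cases h : (a : Fin N) = j
          · simp only [h, dif_pos]
            exact Subtype.ext h.symm
          · simp [h] }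
    have hmat : ((M₀.updateRow ⟨j, hj⟩ (Pi.single ⟨j, hj⟩ 1)).submatrix e e)
        = Matrix.fromBlocks 1 0
            (Matrix.of fun (k : {x // x ∈ α.erase j}) (_ : Unit) => -K (k : Fin N) j)
            (Matrix.of fun a b : {x // x ∈ α.erase j} =>
              if a = b then (fun k => z k + K k j) (a : Fin N)
                + ∑ l ∈ (α.erase j).erase (a : Fin N), K a l
              else -K (a : Fin N) (b : Fin N)) := by
      ext (u | k) (v | l)
      · simp only [Matrix.submatrix_apply, e, Equiv.coe_fn_mk, Sum.elim_inl,
          Matrix.updateRow_self, Pi.single_eq_same, Matrix.fromBlocks_apply₁₁,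
          Matrix.one_apply_eq]
      · have hne : (⟨(l : Fin N), hinc l⟩ : α) ≠ ⟨j, hj⟩ :=
          fun h => (Finset.mem_erase.mp l.2).1 (congrArg Subtype.val h)
        simp only [Matrix.submatrix_apply, e, Equiv.coe_fn_mk, Sum.elim_inl,
          Sum.elim_inr, Matrix.updateRow_self, Matrix.fromBlocks_apply₁₂,
          Matrix.zero_apply]
        exact Pi.single_eq_of_ne hne _
      · have hne : (⟨(k : Fin N), hinc k⟩ : α) ≠ ⟨j, hj⟩ :=
          fun h => (Finset.mem_erase.mp k.2).1 (congrArg Subtype.val h)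
        simp only [Matrix.submatrix_apply, e, Equiv.coe_fn_mk, Sum.elim_inl,
          Sum.elim_inr, Matrix.updateRow_ne hne, hM₀, Matrix.of_apply, if_neg hne,
          Matrix.fromBlocks_apply₂₁]
      · have hnek : (⟨(k : Fin N), hinc k⟩ : α) ≠ ⟨j, hj⟩ :=
          fun h => (Finset.mem_erase.mp k.2).1 (congrArg Subtype.val h)
        have hkj : (k : Fin N) ≠ j := (Finset.mem_erase.mp k.2).1
        simp only [Matrix.submatrix_apply, e, Equiv.coe_fn_mk, Sum.elim_inr,
          Matrix.updateRow_ne hnek, hM₀, Matrix.of_apply, Matrix.fromBlocks_apply₂₂]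
        by_cases hkl : k = l
        · subst hkl
          have heq : (⟨(k : Fin N), hinc k⟩ : α) = ⟨(k : Fin N), hinc k⟩ := rfl
          rw [if_pos heq, if_pos rfl, Function.update_of_ne hkj]
          have hsum : ∑ m ∈ α.erase (k : Fin N), K k m
              = K (k : Fin N) j + ∑ m ∈ (α.erase j).erase (k : Fin N), K k m := by
            rw [erase_erase_comm, Finset.add_sum_erase]
            exact Finset.mem_erase.mpr ⟨fun h => hkj h.symm, hj⟩
          rw [hsum]; ring
        · have h2 : (⟨(k : Fin N), hinc k⟩ : α) ≠ ⟨(l : Fin N), hinc l⟩ :=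
            fun h => hkl (Subtype.ext (Subtype.mk.inj h))
          rw [if_neg h2, if_neg hkl]
    rw [← Matrix.det_submatrix_equiv_self e, hmat,
      Matrix.det_fromBlocks_zero₁₂, Matrix.det_one, one_mul]
    rfl
  show (Matrix.of fun a b : α =>
      if a = b then z a + ∑ l ∈ α.erase (a : Fin N), K a l
      else -K (a : Fin N) (b : Fin N)).det = _
  rw [hM, Matrix.det_updateRow_add, hsingle, Matrix.det_updateRow_smul,
    Matrix.updateRow_eq_self, hminor]
  rfl

variable {N : ℕ}

lemma sum_powerset_split {s : Finset (Fin N)} {j : Fin N} (hj : j ∈ s)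
    (g : Finset (Fin N) → ℂ) :
    ∑ δ ∈ s.powerset, g δ
      = ∑ δ ∈ (s.erase j).powerset, g δ
        + ∑ δ ∈ (s.erase j).powerset, g (insert j δ) := by
  conv_lhs => rw [← Finset.insert_erase hj]
  exact Finset.sum_powerset_insert (Finset.notMem_erase j s) g

lemma gaudin_conv (K : Fin N → Fin N → ℂ) (γ : Finset (Fin N)) :
    ∀ x y : Fin N → ℂ,
      gaudin K (x + y) γ = ∑ δ ∈ γ.powerset, gaudin K x δ * gaudin K y (γ \ δ) := by
  induction γ using Finset.strongInduction with
  | _ γ ih =>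
  intro x y
  -- the key one-variable step
  have step : ∀ j ∈ γ, ∀ x : Fin N → ℂ,
      gaudin K (x + y) γ - ∑ δ ∈ γ.powerset, gaudin K x δ * gaudin K y (γ \ δ)
      = gaudin K (Function.update x j 0 + y) γ
        - ∑ δ ∈ γ.powerset,
            gaudin K (Function.update x j 0) δ * gaudin K y (γ \ δ) := by
    intro j hj x
    have hT := ih (γ.erase j) (Finset.erase_ssubset hj)
      (fun k => x k + K k j) y
    -- expansion of the lhs gaudin
    have e1 : gaudin K (x + y) γ
        = (x j + y j) * gaudin K ((fun k => x k + K k j) + y) (γ.erase j)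
          + gaudin K (Function.update (x + y) j 0) γ := by
      rw [gaudin_expand K (x + y) hj]
      congr 1
      congr 1
      apply gaudin_congr
      intro k _
      simp [Pi.add_apply]; ring
    have e2 : gaudin K (Function.update x j 0 + y) γ
        = y j * gaudin K ((fun k => x k + K k j) + y) (γ.erase j)
          + gaudin K (Function.update (x + y) j 0) γ := by
      rw [gaudin_expand K _ hj]
      congr 1
      · congr 1
        · simp
        · apply gaudin_congr
          intro k hk
          have hkj : k ≠ j := (Finset.mem_erase.mp hk).1
          simp [Pi.add_apply, Function.update_of_ne hkj]; ring
      · apply gaudin_congr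
        intro k _
        by_cases hkj : k = j
        · subst hkj; simp
        · simp [Function.update_of_ne hkj]
    -- expansion of the sums
    have e3 : ∑ δ ∈ γ.powerset, gaudin K x δ * gaudin K y (γ \ δ)
        = ∑ δ ∈ (γ.erase j).powerset,
            gaudin K (Function.update x j 0) δ * gaudin K y (γ \ δ)
          + (x j * ∑ δ ∈ (γ.erase j).powerset,
              gaudin K (fun k => x k + K k j) δ * gaudin K y (γ.erase j \ δ)
            + ∑ δ ∈ (γ.erase j).powerset,
                gaudin K (Function.update x j 0) (insert j δ)
                  * gaudin K y (γ.erase j \ δ)) := by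
      rw [sum_powerset_split hj]
      congr 1
      · apply Finset.sum_congr rfl
        intro δ hδ
        have hjδ : j ∉ δ := fun h =>
          Finset.notMem_erase j γ (Finset.mem_powerset.mp hδ h)
        congr 1
        apply gaudin_congr
        intro k hk
        have : k ≠ j := fun h => hjδ (h ▸ hk)
        simp [Function.update_of_ne this]
      · rw [Finset.mul_sum, ← Finset.sum_add_distrib]
        apply Finset.sum_congr rfl
        intro δ hδ
        have hjδ : j ∉ δ := fun h =>
          Finset.notMem_erase j γ (Finset.mem_powerset.mp hδ h)
        have hsd : γ \ insert j δ = γ.erase j \ δ := by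
          ext k
          simp only [Finset.mem_sdiff, Finset.mem_insert, Finset.mem_erase]
          tauto
        rw [gaudin_expand K x (Finset.mem_insert_self j δ),
          Finset.erase_insert hjδ, hsd]
        ring
    have e4 : ∑ δ ∈ γ.powerset,
          gaudin K (Function.update x j 0) δ * gaudin K y (γ \ δ)
        = ∑ δ ∈ (γ.erase j).powerset,
            gaudin K (Function.update x j 0) δ * gaudin K y (γ \ δ)
          + ∑ δ ∈ (γ.erase j).powerset,
              gaudin K (Function.update x j 0) (insert j δ)
                * gaudin K y (γ.erase j \ δ) := by
      rw [sum_powerset_split hj]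
      congr 1
      apply Finset.sum_congr rfl
      intro δ hδ
      have hjδ : j ∉ δ := fun h =>
        Finset.notMem_erase j γ (Finset.mem_powerset.mp hδ h)
      have hsd : γ \ insert j δ = γ.erase j \ δ := by
        ext k
        simp only [Finset.mem_sdiff, Finset.mem_insert, Finset.mem_erase]
        tauto
      rw [hsd]
    rw [e1, e2, e3, e4, hT]
    ring
  -- zero out all coordinates of γ
  have zero_out : ∀ S : Finset (Fin N), S ⊆ γ → ∀ x : Fin N → ℂ,
      gaudin K (x + y) γ - ∑ δ ∈ γ.powerset, gaudin K x δ * gaudin K y (γ \ δ)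
      = gaudin K ((fun k => if k ∈ S then 0 else x k) + y) γ
        - ∑ δ ∈ γ.powerset,
            gaudin K (fun k => if k ∈ S then 0 else x k) δ * gaudin K y (γ \ δ) := by
    intro S
    induction S using Finset.induction_on with
    | empty =>
      intro _ x
      simp
    | insert j S hjS ih2 =>
      intro hins x
      have hjγ : j ∈ γ := hins (Finset.mem_insert_self j S)
      have hSγ : S ⊆ γ := fun k hk => hins (Finset.mem_insert_of_mem hk)
      have hfun : (fun k => if k ∈ insert j S then 0 else x k)
          = Function.update (fun k => if k ∈ S then 0 else x k) j 0 := by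
        funext k
        by_cases hkj : k = j
        · subst hkj; simp
        · simp [Function.update_of_ne hkj, hkj]
      rw [ih2 hSγ x, step j hjγ, hfun]
  have hz := zero_out γ (subset_refl γ) x
  have hx0 : ∀ δ ∈ γ.powerset,
      gaudin K (fun k => if k ∈ γ then 0 else x k) δ = gaudin K 0 δ := by
    intro δ hδ
    apply gaudin_congr
    intro k hk
    simp [Finset.mem_powerset.mp hδ hk]
  have hfinal : ∑ δ ∈ γ.powerset,
      gaudin K (fun k => if k ∈ γ then 0 else x k) δ * gaudin K y (γ \ δ)
      = gaudin K y γ := by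
    rw [Finset.sum_eq_single ∅]
    · rw [hx0 ∅ (Finset.empty_mem_powerset γ), gaudin_empty, one_mul, Finset.sdiff_empty]
    · intro δ hδ hδne
      rw [hx0 δ hδ, gaudin_zero K (Finset.nonempty_of_ne_empty hδne), zero_mul]
    · intro h
      exact absurd (Finset.empty_mem_powerset γ) h
  have hyy : gaudin K ((fun k => if k ∈ γ then 0 else x k) + y) γ = gaudin K y γ := by
    apply gaudin_congr
    intro k hk
    simp [hk]
  rw [hyy, hfinal, sub_self, sub_eq_zero] at hz
  exact hz


/-- Change of volume parameter from `l = L − l₀` to `L`: with `ρ_t(α) = ρ(t • c, α)`,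
`∑_{α} F(α) ρ_{L−l₀}(univ \ α) = ∑_{α} (∑_{β ⊆ α} F(β) ρ_{−l₀}(α \ β)) ρ_L(univ \ α)`. -/
theorem gaudin_volume_shift {N : ℕ} (K : Fin N → Fin N → ℂ)
    (hK : ∀ j k, K j k = K k j) (c : Fin N → ℂ)
    (F : Finset (Fin N) → ℂ) (L l₀ : ℂ) :
    ∑ α ∈ (Finset.univ : Finset (Fin N)).powerset,
        F α * gaudin K ((L - l₀) • c) (Finset.univ \ α)
      = ∑ α ∈ (Finset.univ : Finset (Fin N)).powerset,
          (∑ β ∈ α.powerset, F β * gaudin K ((-l₀) • c) (α \ β))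
            * gaudin K (L • c) (Finset.univ \ α) := by
  classical
  symm
  calc ∑ α ∈ (Finset.univ : Finset (Fin N)).powerset,
        (∑ β ∈ α.powerset, F β * gaudin K ((-l₀) • c) (α \ β))
          * gaudin K (L • c) (Finset.univ \ α)
      = ∑ α ∈ (Finset.univ : Finset (Fin N)).powerset, ∑ β ∈ α.powerset,
          F β * gaudin K ((-l₀) • c) (α \ β) * gaudin K (L • c) (Finset.univ \ α) := by
        refine Finset.sum_congr rfl fun α _ => ?_
        rw [Finset.sum_mul]
    _ = ∑ p ∈ (Finset.univ : Finset (Fin N)).powerset.sigma (fun α => α.powerset),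
          F p.2 * gaudin K ((-l₀) • c) (p.1 \ p.2) * gaudin K (L • c) (Finset.univ \ p.1) := by
        rw [Finset.sum_sigma]
    _ = ∑ q ∈ (Finset.univ : Finset (Fin N)).powerset.sigma
          (fun β => ((Finset.univ : Finset (Fin N)) \ β).powerset),
          F q.1 * gaudin K ((-l₀) • c) q.2
            * gaudin K (L • c) ((Finset.univ \ q.1) \ q.2) := by
        refine Finset.sum_nbij' (fun p => ⟨p.2, p.1 \ p.2⟩) (fun q => ⟨q.1 ∪ q.2, q.1⟩)
          ?_ ?_ ?_ ?_ ?_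
        · rintro ⟨α, β⟩ hp
          have h := Finset.mem_sigma.mp hp
          refine Finset.mem_sigma.mpr ⟨Finset.mem_powerset.mpr (Finset.subset_univ _), ?_⟩
          refine Finset.mem_powerset.mpr ?_
          intro k hk
          have hkβ := Finset.mem_sdiff.mp hk
          exact Finset.mem_sdiff.mpr ⟨Finset.mem_univ k, hkβ.2⟩
        · rintro ⟨β, δ⟩ hq
          have h := Finset.mem_sigma.mp hq
          refine Finset.mem_sigma.mpr ⟨Finset.mem_powerset.mpr (Finset.subset_univ _),
            Finset.mem_powerset.mpr Finset.subset_union_left⟩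
        · rintro ⟨α, β⟩ hp
          have h := Finset.mem_sigma.mp hp
          have hβα : β ⊆ α := Finset.mem_powerset.mp h.2
          dsimp only
          rw [show β ∪ α \ β = α from Finset.union_sdiff_of_subset hβα]
        · rintro ⟨β, δ⟩ hq
          have h := Finset.mem_sigma.mp hq
          have hδ : δ ⊆ Finset.univ \ β := Finset.mem_powerset.mp h.2
          have hdisj : Disjoint β δ := by
            refine Finset.disjoint_left.mpr fun k hkβ hkδ => ?_
            exact (Finset.mem_sdiff.mp (hδ hkδ)).2 hkβ
          dsimp only
          rw [show (β ∪ δ) \ β = δ from Finset.union_sdiff_cancel_left hdisj]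
        · rintro ⟨α, β⟩ hp
          have h := Finset.mem_sigma.mp hp
          have hβα : β ⊆ α := Finset.mem_powerset.mp h.2
          have : (Finset.univ \ β) \ (α \ β) = Finset.univ \ α := by
            ext k
            simp only [Finset.mem_sdiff, Finset.mem_univ, true_and]
            constructor
            · rintro ⟨hkβ, hkαβ⟩ hkα
              exact hkαβ ⟨hkα, hkβ⟩
            · intro hkα
              exact ⟨fun hkβ => hkα (hβα hkβ), fun hk => hkα hk.1⟩
          simp only [this]
    _ = ∑ β ∈ (Finset.univ : Finset (Fin N)).powerset,
          ∑ δ ∈ ((Finset.univ : Finset (Fin N)) \ β).powerset,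
          F β * (gaudin K ((-l₀) • c) δ
            * gaudin K (L • c) ((Finset.univ \ β) \ δ)) := by
        rw [Finset.sum_sigma]
        refine Finset.sum_congr rfl fun β _ => Finset.sum_congr rfl fun δ _ => ?_
        ring
    _ = ∑ β ∈ (Finset.univ : Finset (Fin N)).powerset,
          F β * gaudin K ((L - l₀) • c) (Finset.univ \ β) := by
        refine Finset.sum_congr rfl fun β _ => ?_
        rw [← Finset.mul_sum]
        congr 1
        rw [← gaudin_conv K (Finset.univ \ β) ((-l₀) • c) (L • c)]
        congr 1
        funext k
        simp [Pi.add_apply]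
        ring
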